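/- arXiv:2503.17611 — 2 statements merged into one kernel-verified Lean document; each statement's English description precedes it below -/
import Mathlib

section
/- Let k ∈ ℕ and let f : ℕ → ℕ be a polynomial function with coefficients in ℕ ∪ {0} (mapping positive naturals to positive naturals) that is NOT continuous as a map from the Macías space M(ℕ) to itself. Then the function h(x) := x^k · f(x) is also not continuous as a map from M(ℕ) to itself. -/
open Topology

/-- For `n` a positive natural, `σ_n = {m ∈ ℕ⁺ : gcd(n,m) = 1}`. -/
def sigmaSet (n : ℕ+) : Set ℕ+ := {m : ℕ+ | Nat.Coprime (n : ℕ) (m : ℕ)}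

/-- The Macías topology `τ_M` on the positive naturals, generated by the sets `σ_n`. -/
def tauM : TopologicalSpace ℕ+ :=
  TopologicalSpace.generateFrom (Set.range sigmaSet)

lemma sigma_isOpen (n : ℕ+) : IsOpen[tauM] (sigmaSet n) :=
  TopologicalSpace.GenerateOpen.basic _ ⟨n, rfl⟩

lemma exists_sigma_subset {U : Set ℕ+} (hU : IsOpen[tauM] U) {x : ℕ+} (hx : x ∈ U) :
    ∃ M : ℕ+, x ∈ sigmaSet M ∧ sigmaSet M ⊆ U := by
  induction hU with
  | basic s hs =>
      obtain ⟨n, rfl⟩ := hs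
      exact ⟨n, hx, le_refl _⟩
  | univ => exact ⟨1, Nat.coprime_one_left _, Set.subset_univ _⟩
  | inter U V hU hV ihU ihV =>
      obtain ⟨M1, hm1, hs1⟩ := ihU hx.1
      obtain ⟨M2, hm2, hs2⟩ := ihV hx.2
      refine ⟨M1 * M2, ?_, ?_⟩
      · show Nat.Coprime ((M1 * M2 : ℕ+) : ℕ) _
        rw [PNat.mul_coe]
        exact Nat.coprime_mul_iff_left.mpr ⟨hm1, hm2⟩
      · intro z hz
        have : Nat.Coprime ((M1 : ℕ) * (M2 : ℕ)) (z : ℕ) := hz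
        rw [Nat.coprime_mul_iff_left] at this
        exact ⟨hs1 this.1, hs2 this.2⟩
  | sUnion S hS ih =>
      obtain ⟨s, hsS, hxs⟩ := hx
      obtain ⟨M, hm, hsub⟩ := ih s hsS hxs
      exact ⟨M, hm, hsub.trans (Set.subset_sUnion_of_mem hsS)⟩

/-- Criterion for discontinuity. -/
lemma discont_of_prime (h : ℕ+ → ℕ+) (q : ℕ) (hq : q.Prime) (x' : ℕ+)
    (hx' : ¬ q ∣ (h x' : ℕ))
    (hz : ∀ M : ℕ+, ∃ z : ℕ+, z ∈ sigmaSet M ∧ q ∣ (h z : ℕ)) :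
    ¬ Continuous[tauM, tauM] h := by
  intro hc
  set Q : ℕ+ := ⟨q, hq.pos⟩ with hQ
  have hopen : IsOpen[tauM] (h ⁻¹' sigmaSet Q) := continuous_def.mp hc _ (sigma_isOpen Q)
  have hxmem : x' ∈ h ⁻¹' sigmaSet Q := (hq.coprime_iff_not_dvd).mpr hx'
  obtain ⟨M, _, hsub⟩ := exists_sigma_subset hopen hxmem
  obtain ⟨z, hzM, hzd⟩ := hz M
  have : Nat.Coprime q ((h z : ℕ)) := hsub hzM
  exact hq.one_lt.ne' (Nat.dvd_one.mp (this ▸ Nat.dvd_gcd dvd_rfl hzd))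

/-- Given a prime `q` and `y` with `q ∤ y`, every `σ_M` contains a point `≡ y (mod q)`. -/
lemma exists_crt (q : ℕ) (hq : q.Prime) (y : ℕ) (hy : ¬ q ∣ y) (M : ℕ+) :
    ∃ z : ℕ+, (z : ℕ) ∈ {m | Nat.Coprime (M : ℕ) m} ∧ (z : ℕ) ≡ y [MOD q] := by
  have hM0 : (M : ℕ) ≠ 0 := (M.pos).ne'
  set M0 := ordCompl[q] (M : ℕ) with hM0def
  have hco : Nat.Coprime q M0 := Nat.coprime_ordCompl hq hM0
  obtain ⟨z, hz1, hz2⟩ := Nat.chineseRemainder hco y 1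
  have hzq : ¬ q ∣ z := by
    intro hd
    exact hy (Nat.modEq_zero_iff_dvd.mp (((Nat.modEq_zero_iff_dvd.mpr hd).symm.trans hz1).symm))
  have hzpos : 0 < z := by
    rcases Nat.eq_zero_or_pos z with rfl | h
    · exact absurd (dvd_zero q) hzq
    · exact h
  refine ⟨⟨z, hzpos⟩, ?_, hz1⟩
  show Nat.Coprime (M : ℕ) z
  by_contra hnc
  set g := Nat.gcd (M : ℕ) z with hg
  have hg1 : g ≠ 1 := hnc
  have hr : (Nat.minFac g).Prime := Nat.minFac_prime hg1
  set r := Nat.minFac g with hrdef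
  have hrM : r ∣ (M : ℕ) := (Nat.minFac_dvd g).trans (Nat.gcd_dvd_left _ _)
  have hrz : r ∣ z := (Nat.minFac_dvd g).trans (Nat.gcd_dvd_right _ _)
  by_cases hrq : r = q
  · exact hzq (hrq ▸ hrz)
  · have hqr : ¬ q ∣ r := fun hd => hrq ((Nat.prime_dvd_prime_iff_eq hq hr).mp hd).symm
    have hrM0 : r ∣ M0 := Nat.dvd_ordCompl_of_dvd_not_dvd hrM hqr
    have : z ≡ 1 [MOD r] := hz2.of_dvd hrM0
    have h10 : (1 : ℕ) ≡ 0 [MOD r] := (this.symm.trans (Nat.modEq_zero_iff_dvd.mpr hrz))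
    exact hr.one_lt.ne' (Nat.dvd_one.mp (Nat.modEq_zero_iff_dvd.mp h10))

lemma exists_unit_nonroot (q n : ℕ) (hq : q.Prime) (hn : n + 1 < q) (a : ℕ → ℕ)
    (j : ℕ) (hj : j ∈ Finset.range (n + 1)) (haj : ¬ q ∣ a j) :
    ∃ u : ZMod q, u ≠ 0 ∧ (∑ i ∈ Finset.range (n + 1), (a i : ZMod q) * u ^ i) ≠ 0 := by
  haveI : Fact q.Prime := ⟨hq⟩
  set F : Polynomial (ZMod q) :=
    ∑ i ∈ Finset.range (n + 1), Polynomial.C ((a i : ZMod q)) * Polynomial.X ^ i with hF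
  have hcoeff : F.coeff j = (a j : ZMod q) := by
    rw [hF, Polynomial.finset_sum_coeff]
    simp only [Polynomial.coeff_C_mul, Polynomial.coeff_X_pow, mul_ite, mul_one, mul_zero]
    rw [Finset.sum_ite_eq (Finset.range (n + 1)) j]
    simp [hj]
  have hFne : F ≠ 0 := by
    intro h0
    rw [h0, Polynomial.coeff_zero] at hcoeff
    exact haj ((ZMod.natCast_eq_zero_iff _ _).mp hcoeff.symm)
  have hdeg : F.natDegree ≤ n := by
    rw [hF]
    refine Polynomial.natDegree_sum_le_of_forall_le _ _ (fun i hi => ?_)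
    refine le_trans (Polynomial.natDegree_C_mul_le _ _) ?_
    rw [Polynomial.natDegree_X_pow]
    exact Nat.lt_succ_iff.mp (Finset.mem_range.mp hi)
  set Z : Finset (ZMod q) := insert 0 F.roots.toFinset with hZ
  have hcard : Z.card < Fintype.card (ZMod q) := by
    have h1 : Z.card ≤ F.roots.toFinset.card + 1 := Finset.card_insert_le _ _
    have h2 : F.roots.toFinset.card ≤ Multiset.card F.roots := Multiset.toFinset_card_le _
    have h3 : Multiset.card F.roots ≤ F.natDegree := Polynomial.card_roots' F
    rw [ZMod.card]
    omega
  have hne : (Finset.univ \ Z : Finset (ZMod q)).Nonempty := by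
    rw [← Finset.card_pos, Finset.card_sdiff_of_subset (Finset.subset_univ Z), Finset.card_univ]
    omega
  obtain ⟨u, hu⟩ := hne
  rw [Finset.mem_sdiff] at hu
  have huZ := hu.2
  rw [hZ, Finset.mem_insert, Multiset.mem_toFinset] at huZ
  push_neg at huZ
  refine ⟨u, huZ.1, fun h0 => huZ.2 ?_⟩
  rw [Polynomial.mem_roots hFne]
  show F.IsRoot u
  rw [Polynomial.IsRoot, hF]
  rw [Polynomial.eval_finset_sum]
  simpa using h0

lemma poly_split (a : ℕ → ℕ) (n j : ℕ) (hj : j ≤ n) (hmin : ∀ i, i < j → a i = 0)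
    (A c L : ℕ) (hA : A = c * L) (hc : c = a j) :
    ∑ i ∈ Finset.range (n + 1), a i * A ^ i
      = A ^ j * (c * (1 + L * ∑ t ∈ Finset.range (n - j), a (j + (t + 1)) * A ^ t)) := by
  have h1 : ∑ i ∈ Finset.range (n + 1), a i * A ^ i
      = ∑ i ∈ Finset.Ico j (n + 1), a i * A ^ i := by
    rw [Finset.range_eq_Ico, ← Finset.sum_Ico_consecutive _ (Nat.zero_le j) (by omega)]
    have hz : ∑ i ∈ Finset.Ico 0 j, a i * A ^ i = 0 :=
      Finset.sum_eq_zero (fun i hi => by rw [hmin i (Finset.mem_Ico.mp hi).2, zero_mul])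
    rw [hz, zero_add]
  rw [h1, Finset.sum_Ico_eq_sum_range, show n + 1 - j = (n - j) + 1 from by omega,
    Finset.sum_range_succ']
  have hterm : ∀ i, a (j + (i + 1)) * A ^ (j + (i + 1))
      = A ^ (j + 1) * (a (j + (i + 1)) * A ^ i) := by
    intro i
    have hp : A ^ (j + (i + 1)) = A ^ (j + 1) * A ^ i := by
      rw [← pow_add]
      congr 1
      omega
    rw [hp]
    ring
  rw [Finset.sum_congr rfl (fun i _ => hterm i), ← Finset.mul_sum]
  have h0 : a (j + 0) * A ^ (j + 0) = c * A ^ j := by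
    rw [Nat.add_zero, hc]
  rw [h0, hA]
  ring

lemma isOpen_empty_tauM : IsOpen[tauM] (∅ : Set ℕ+) := by
  rw [← Set.sUnion_empty]
  exact TopologicalSpace.GenerateOpen.sUnion ∅ (fun _ h => absurd h (Set.notMem_empty _))

lemma monomial_continuous (f : ℕ+ → ℕ+) (c j : ℕ)
    (hfv : ∀ x : ℕ+, (f x : ℕ) = c * (x : ℕ) ^ j) :
    Continuous[tauM, tauM] f := by
  show @Continuous _ _ tauM (TopologicalSpace.generateFrom (Set.range sigmaSet)) f
  rw [continuous_generateFrom_iff]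
  rintro s ⟨m, rfl⟩
  by_cases hmc : Nat.Coprime (m : ℕ) c
  · rcases Nat.eq_zero_or_pos j with rfl | hjpos
    · have he : f ⁻¹' sigmaSet m = Set.univ := by
        ext x
        simp only [Set.mem_preimage, Set.mem_univ, iff_true, sigmaSet, Set.mem_setOf_eq, hfv x,
          pow_zero, mul_one]
        exact hmc
      rw [he]
      exact TopologicalSpace.GenerateOpen.univ
    · have he : f ⁻¹' sigmaSet m = sigmaSet m := by
        ext x
        simp only [Set.mem_preimage, sigmaSet, Set.mem_setOf_eq, hfv x,
          Nat.coprime_mul_iff_right, Nat.coprime_pow_right_iff hjpos]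
        exact and_iff_right hmc
      rw [he]
      exact sigma_isOpen m
  · have he : f ⁻¹' sigmaSet m = ∅ := by
      ext x
      simp only [Set.mem_preimage, sigmaSet, Set.mem_setOf_eq, Set.mem_empty_iff_false,
        iff_false, hfv x, Nat.coprime_mul_iff_right]
      exact fun h => hmc h.1
    rw [he]
    exact isOpen_empty_tauM

/-- `f : ℕ⁺ → ℕ⁺` is a polynomial function with coefficients in `ℕ ∪ {0}`. -/
def IsPolyFun (f : ℕ+ → ℕ+) : Prop :=
  ∃ (n : ℕ) (a : ℕ → ℕ),
    ∀ x : ℕ+, (f x : ℕ) = ∑ k ∈ Finset.range (n + 1), a k * (x : ℕ) ^ k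

theorem pow_mul_discontinuous (k : ℕ+) (f : ℕ+ → ℕ+) (hf : IsPolyFun f)
    (hfd : ¬ Continuous[tauM, tauM] f) :
    ¬ Continuous[tauM, tauM] (fun x : ℕ+ => x ^ (k : ℕ) * f x) := by
  classical
  obtain ⟨n, a, ha⟩ := hf
  have hPex : ∃ i, a i ≠ 0 := by
    by_contra h
    push_neg at h
    have h1 := ha 1
    simp only [PNat.one_coe, one_pow, mul_one] at h1
    rw [Finset.sum_eq_zero (fun i _ => h i)] at h1
    exact (f 1).pos.ne' h1
  set j := Nat.find hPex with hjdef
  have hj_ne : a j ≠ 0 := Nat.find_spec hPex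
  have hmin : ∀ i, i < j → a i = 0 := fun i hi => not_not.mp (Nat.find_min hPex hi)
  have hjn : j ≤ n := by
    by_contra hgt
    push_neg at hgt
    have h1 := ha 1
    simp only [PNat.one_coe, one_pow, mul_one] at h1
    rw [Finset.sum_eq_zero (fun i hi => hmin i (lt_of_lt_of_le (Finset.mem_range.mp hi) hgt))]
      at h1
    exact (f 1).pos.ne' h1
  by_cases hsingle : ∀ i, i ≤ n → i ≠ j → a i = 0
  · refine absurd (monomial_continuous f (a j) j (fun x => ?_)) hfd
    rw [ha x]
    exact Finset.sum_eq_single_of_mem j (Finset.mem_range.mpr (by omega))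
      (fun i hi hne => by
        rw [hsingle i (Nat.lt_succ_iff.mp (Finset.mem_range.mp hi)) hne, zero_mul])
  · push_neg at hsingle
    obtain ⟨i₀, hi₀n, hi₀j, hi₀⟩ := hsingle
    have hj_lt : j < i₀ := by
      rcases Nat.lt_trichotomy i₀ j with h | h | h
      · exact absurd (hmin i₀ h) hi₀
      · exact absurd h hi₀j
      · exact h
    set c := a j with hc
    set B := n + 2 + ∑ i ∈ Finset.range (n + 1), a i with hB
    set L := Nat.factorial B with hL
    set A := c * L with hA
    set T := ∑ t ∈ Finset.range (n - j), a (j + (t + 1)) * A ^ t with hT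
    have hcpos : 0 < c := Nat.pos_of_ne_zero hj_ne
    have hLpos : 0 < L := Nat.factorial_pos B
    have hApos : 0 < A := Nat.mul_pos hcpos hLpos
    have hTpos : 0 < T := by
      have h1 : a (j + (i₀ - j - 1 + 1)) * A ^ (i₀ - j - 1) ≤ T :=
        Finset.single_le_sum (f := fun t => a (j + (t + 1)) * A ^ t)
          (fun _ _ => Nat.zero_le _) (Finset.mem_range.mpr (by omega))
      have h2 : j + (i₀ - j - 1 + 1) = i₀ := by omega
      rw [h2] at h1
      have h3 : 0 < a i₀ * A ^ (i₀ - j - 1) :=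
        Nat.mul_pos (Nat.pos_of_ne_zero hi₀) (Nat.pow_pos hApos)
      omega
    have hLT : 1 ≤ L * T := Nat.mul_pos hLpos hTpos
    set q := Nat.minFac (1 + L * T) with hq_def
    have hq : q.Prime := Nat.minFac_prime (by omega)
    have hqW : q ∣ 1 + L * T := Nat.minFac_dvd _
    have hqB : B < q := by
      by_contra hle
      push_neg at hle
      have hqL : q ∣ L := Nat.dvd_factorial hq.pos hle
      have h1 : q ∣ 1 := (Nat.dvd_add_right ((hqL.mul_right T))).mp ?_
      · exact hq.one_lt.ne' (Nat.dvd_one.mp h1)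
      · rwa [Nat.add_comm] at hqW
    have hsum_le : ∀ i, i ≤ n → a i ≤ B := by
      intro i hi
      have h1 : a i ≤ ∑ i ∈ Finset.range (n + 1), a i :=
        Finset.single_le_sum (fun _ _ => Nat.zero_le _) (Finset.mem_range.mpr (by omega))
      omega
    have hqc : ¬ q ∣ c := fun hd =>
      absurd (Nat.le_of_dvd hcpos hd) (by have := hsum_le j hjn; omega)
    have hqL : ¬ q ∣ L := fun hd => absurd (hq.dvd_factorial.mp hd) (by omega)
    have hqA : ¬ q ∣ A := fun hd => ((Nat.Prime.dvd_mul hq).mp hd).elim hqc hqL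
    have hsplit : ∑ i ∈ Finset.range (n + 1), a i * A ^ i = A ^ j * (c * (1 + L * T)) :=
      poly_split a n j hjn hmin A c L rfl rfl
    have hdvd_sum : q ∣ ∑ i ∈ Finset.range (n + 1), a i * A ^ i := by
      rw [hsplit]
      exact Dvd.dvd.mul_left (Dvd.dvd.mul_left hqW c) _
    haveI : Fact q.Prime := ⟨hq⟩
    have hcast : ∀ z : ℕ+, ((f z : ℕ) : ZMod q)
        = ∑ i ∈ Finset.range (n + 1), (a i : ZMod q) * (((z : ℕ) : ZMod q)) ^ i := by
      intro z
      rw [ha z]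
      push_cast
      rfl
    obtain ⟨u, hu0, huF⟩ := exists_unit_nonroot q n hq (by omega) a j
      (Finset.mem_range.mpr (by omega)) hqc
    have hx'pos : 0 < u.val := Nat.pos_of_ne_zero (fun h => hu0 ((ZMod.val_eq_zero u).mp h))
    set x' : ℕ+ := ⟨u.val, hx'pos⟩ with hx'def
    have hx'u : (((x' : ℕ)) : ZMod q) = u := ZMod.natCast_zmod_val u
    apply discont_of_prime _ q hq x'
    · intro hd
      have h0 : (((x' ^ (k : ℕ) * f x' : ℕ+) : ℕ) : ZMod q) = 0 :=
        (ZMod.natCast_eq_zero_iff _ _).mpr hd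
      rw [PNat.mul_coe, PNat.pow_coe, Nat.cast_mul, Nat.cast_pow, hx'u, hcast x', hx'u] at h0
      rcases mul_eq_zero.mp h0 with h | h
      · exact hu0 (pow_eq_zero_iff (by exact_mod_cast k.pos.ne') |>.mp h)
      · exact huF h
    · intro M
      obtain ⟨z, hzM, hzy⟩ := exists_crt q hq A hqA M
      refine ⟨z, hzM, ?_⟩
      have hzA : (((z : ℕ)) : ZMod q) = ((A : ℕ) : ZMod q) :=
        (ZMod.natCast_eq_natCast_iff _ _ _).mpr hzy
      have h2 : ((f z : ℕ) : ZMod q)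
          = ((∑ i ∈ Finset.range (n + 1), a i * A ^ i : ℕ) : ZMod q) := by
        rw [hcast z, hzA]
        push_cast
        rfl
      have h3 : q ∣ (f z : ℕ) := by
        rw [← ZMod.natCast_eq_zero_iff, h2,
          ZMod.natCast_eq_zero_iff]
        exact hdvd_sum
      show q ∣ ((z ^ (k : ℕ) * f z : ℕ+) : ℕ)
      rw [PNat.mul_coe]
      exact Dvd.dvd.mul_left h3 _
end

section
/- Let f(x) = Σ_{k=0}^{n} a_k x^k be a polynomial function from ℕ to ℕ with coefficients a_0, …, a_n ∈ ℕ ∪ {0}, such that a_0 ≠ 0 and a_i ≠ 0 for at least one index i ∈ {1, 2, …, n}. Then f is not continuous as a map from the Macías space M(ℕ) to itself. -/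
open Topology

lemma modeq_sum_pow (a : ℕ → ℕ) (s : Finset ℕ) {x y N : ℕ} (h : x ≡ y [MOD N]) :
    (∑ k ∈ s, a k * x ^ k) ≡ (∑ k ∈ s, a k * y ^ k) [MOD N] := by
  classical
  induction s using Finset.induction_on with
  | empty => simp [Nat.ModEq.refl]
  | insert _ _ hk ih =>
    rw [Finset.sum_insert hk, Finset.sum_insert hk]
    exact ((Nat.ModEq.refl _).mul (h.pow _)).add ih

lemma coprime_of_modeq_one {m r : ℕ} (h : r ≡ 1 [MOD m]) : Nat.Coprime m r := by
  rcases Nat.eq_zero_or_pos m with hm | hm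
  · subst hm
    have : r = 1 := by simpa [Nat.ModEq] using h
    simp [this, Nat.Coprime]
  · have h' : r % m = 1 % m := h
    rw [Nat.Coprime, Nat.gcd_rec, h', ← Nat.gcd_rec, Nat.gcd_one_right]

lemma exists_sigma_subset_s9 :
    ∀ ⦃U : Set ℕ+⦄, TopologicalSpace.GenerateOpen (Set.range sigmaSet) U →
      (1 : ℕ+) ∈ U → ∃ m : ℕ+, sigmaSet m ⊆ U := by
  intro U hU
  induction hU with
  | basic s hs =>
    intro _
    obtain ⟨m, rfl⟩ := hs
    exact ⟨m, subset_rfl⟩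
  | univ => exact fun _ => ⟨1, fun _ _ => trivial⟩
  | inter s t _ _ ihs iht =>
    intro h1
    obtain ⟨ms, hms⟩ := ihs h1.1
    obtain ⟨mt, hmt⟩ := iht h1.2
    refine ⟨ms * mt, fun y hy => ?_⟩
    have hy' : Nat.Coprime ((ms : ℕ) * (mt : ℕ)) (y : ℕ) := by
      simpa [sigmaSet, PNat.mul_coe] using hy
    exact ⟨hms (Nat.Coprime.coprime_dvd_left (dvd_mul_right _ _) hy'),
      hmt (Nat.Coprime.coprime_dvd_left (dvd_mul_left _ _) hy')⟩
  | sUnion S _ ih =>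
    intro h1
    obtain ⟨s, hsS, hs1⟩ := h1
    obtain ⟨m, hm⟩ := ih s hsS hs1
    exact ⟨m, hm.trans (Set.subset_sUnion_of_mem hsS)⟩

theorem poly_const_term_discontinuous (n : ℕ) (a : ℕ → ℕ) (f : ℕ+ → ℕ+)
    (hf : ∀ x : ℕ+, (f x : ℕ) = ∑ k ∈ Finset.range (n + 1), a k * (x : ℕ) ^ k)
    (h0 : a 0 ≠ 0) (hi : ∃ i, 1 ≤ i ∧ i ≤ n ∧ a i ≠ 0) :
    ¬ Continuous[tauM, tauM] f := by
  intro hcont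
  obtain ⟨i, hi1, hin, hai⟩ := hi
  set c : ℕ := ∑ k ∈ Finset.range (n + 1), a k with hc_def
  have hc1 : (f 1 : ℕ) = c := by simpa using hf 1
  have hc2 : 2 ≤ c := by
    have hsub : ({0, i} : Finset ℕ) ⊆ Finset.range (n + 1) := by
      intro x hx
      simp only [Finset.mem_insert, Finset.mem_singleton] at hx
      rcases hx with rfl | rfl <;> simp only [Finset.mem_range] <;> omega
    have hle : (∑ k ∈ ({0, i} : Finset ℕ), a k) ≤ c :=
      Finset.sum_le_sum_of_subset hsub
    rw [Finset.sum_pair (by omega : (0 : ℕ) ≠ i)] at hle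
    omega
  set t : ℕ := 1 + c ^ 2 * a 0 with ht_def
  have htpos : 0 < t := by omega
  set T : ℕ+ := ⟨t, htpos⟩ with hT_def
  have hft : (f T : ℕ) = ∑ k ∈ Finset.range (n + 1), a k * t ^ k := hf T
  set ft : ℕ := (f T : ℕ) with hft_def
  -- ft ≥ t
  have ht_le : t ≤ ft := by
    have h1 : a i * t ^ i ≤ ft := by
      rw [hft]
      exact Finset.single_le_sum (f := fun k => a k * t ^ k)
        (fun _ _ => Nat.zero_le _) (by simp [Finset.mem_range]; omega)
    have h2 : t ≤ t ^ i := by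
      calc t = t ^ 1 := (pow_one t).symm
      _ ≤ t ^ i := Nat.pow_le_pow_right (by omega) hi1
    have h3 : t ^ i ≤ a i * t ^ i := Nat.le_mul_of_pos_left _ (by omega)
    omega
  have ha0 : 1 ≤ a 0 := Nat.one_le_iff_ne_zero.mpr h0
  have htc : c < t := by
    have h1 : c ≤ c * c := Nat.le_mul_of_pos_left c (by omega)
    have h2 : c * c ≤ c * c * a 0 := Nat.le_mul_of_pos_right _ (by omega)
    have h3 : t = 1 + c * c * a 0 := by rw [ht_def]; ring
    linarith
  -- t ≡ 1 [MOD c^2]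
  have hts : t ≡ 1 [MOD c ^ 2] :=
    ((Nat.modEq_iff_dvd' (by omega)).mpr ⟨a 0, by omega⟩).symm
  have hftc : ft ≡ c [MOD c ^ 2] := by
    have := modeq_sum_pow a (Finset.range (n + 1)) hts
    rw [← hft] at this
    simpa using this
  have hcft : c ∣ ft := by
    have h' : ft ≡ c [MOD c] := Nat.ModEq.of_dvd ⟨c, (sq c)⟩ hftc
    have h'' : ft % c = c % c := h'
    rw [Nat.mod_self] at h''
    exact Nat.dvd_of_mod_eq_zero h''
  set u : ℕ := ft / c with hu_def
  have hu : ft = c * u := (Nat.mul_div_cancel' hcft).symm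
  have hu2 : 2 ≤ u := by nlinarith
  have hcu1 : c ∣ u - 1 := by
    have hd : c ^ 2 ∣ ft - c := (Nat.modEq_iff_dvd' (by omega)).mp hftc.symm
    have he : ft - c = c * (u - 1) := by
      rw [Nat.mul_sub, mul_one, hu]
    rw [he, sq] at hd
    exact (Nat.mul_dvd_mul_iff_left (by omega : 0 < c)).mp hd
  set p : ℕ := u.minFac with hp_def
  have hp : p.Prime := Nat.minFac_prime (by omega)
  have hpu : p ∣ u := Nat.minFac_dvd u
  have hpft : p ∣ ft := hu ▸ hpu.mul_left c
  have hpc : ¬ p ∣ c := by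
    intro h
    have h1 : p ∣ u - 1 := h.trans hcu1
    have : p ∣ u - (u - 1) := Nat.dvd_sub hpu h1
    have h2 : u - (u - 1) = 1 := by omega
    rw [h2] at this
    exact hp.one_lt.ne' (Nat.dvd_one.mp this)
  have hpt : ¬ p ∣ t := by
    intro hdvd
    have ht0 : t ≡ 0 [MOD p] := (Nat.modEq_zero_iff_dvd).mpr hdvd
    have h1 : ft ≡ (∑ k ∈ Finset.range (n + 1), a k * 0 ^ k) [MOD p] := by
      have h1' := modeq_sum_pow a (Finset.range (n + 1)) ht0
      rw [← hft] at h1'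
      exact h1'
    have h2 : (∑ k ∈ Finset.range (n + 1), a k * 0 ^ k) = a 0 := by
      rw [Finset.sum_eq_single 0]
      · simp
      · intro b _ hb
        simp [zero_pow hb]
      · simp
    rw [h2] at h1
    have hpa0 : p ∣ a 0 := by
      have : a 0 ≡ 0 [MOD p] := h1.symm.trans ((Nat.modEq_zero_iff_dvd).mpr hpft)
      exact (Nat.modEq_zero_iff_dvd).mp this
    have hpt1 : p ∣ t - 1 := by
      have : t - 1 = c ^ 2 * a 0 := by omega
      rw [this]
      exact hpa0.mul_left _
    have : p ∣ t - (t - 1) := Nat.dvd_sub hdvd hpt1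
    have h3 : t - (t - 1) = 1 := by omega
    rw [h3] at this
    exact hp.one_lt.ne' (Nat.dvd_one.mp this)
  -- topology part
  set P : ℕ+ := ⟨p, hp.pos⟩ with hP_def
  have hσopen : IsOpen[tauM] (sigmaSet P) :=
    TopologicalSpace.isOpen_generateFrom_of_mem ⟨P, rfl⟩
  have hUopen : IsOpen[tauM] (f ⁻¹' sigmaSet P) :=
    @Continuous.isOpen_preimage ℕ+ ℕ+ tauM tauM f hcont _ hσopen
  have hUgen : TopologicalSpace.GenerateOpen (Set.range sigmaSet) (f ⁻¹' sigmaSet P) :=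
    hUopen
  have h1U : (1 : ℕ+) ∈ f ⁻¹' sigmaSet P := by
    show Nat.Coprime (P : ℕ) ((f 1 : ℕ+) : ℕ)
    rw [hc1]
    exact hp.coprime_iff_not_dvd.mpr hpc
  obtain ⟨m, hm⟩ := exists_sigma_subset_s9 hUgen h1U
  set Mn : ℕ := (m : ℕ) with hMn_def
  have hM0 : Mn ≠ 0 := m.pos.ne'
  set m' : ℕ := Mn / p ^ Mn.factorization p with hm'_def
  have hcop : Nat.Coprime p m' := Nat.coprime_ordCompl hp hM0
  obtain ⟨r, hr1, hr2⟩ := Nat.chineseRemainder hcop t 1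
  have hpr : ¬ p ∣ r := by
    intro h
    have hrp : r % p = t % p := hr1
    have h1 : r % p = 0 := Nat.dvd_iff_mod_eq_zero.mp h
    exact hpt (Nat.dvd_iff_mod_eq_zero.mpr (by omega))
  have hr0 : r ≠ 0 := fun h => hpr (h ▸ dvd_zero p)
  set R : ℕ+ := ⟨r, Nat.pos_of_ne_zero hr0⟩ with hR_def
  have hRm : R ∈ sigmaSet m := by
    show Nat.Coprime Mn r
    have heq : p ^ Mn.factorization p * m' = Mn := Nat.ordProj_mul_ordCompl_eq_self Mn p
    rw [← heq]
    exact Nat.Coprime.mul ((hp.coprime_iff_not_dvd.mpr hpr).pow_left _)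
      (coprime_of_modeq_one hr2)
  have hfR : Nat.Coprime p ((f R : ℕ+) : ℕ) := hm hRm
  have hpfR : p ∣ ((f R : ℕ+) : ℕ) := by
    have h1 : ((f R : ℕ+) : ℕ) ≡ ft [MOD p] := by
      have h1' : (∑ k ∈ Finset.range (n + 1), a k * (R : ℕ) ^ k) ≡
          (∑ k ∈ Finset.range (n + 1), a k * t ^ k) [MOD p] := modeq_sum_pow a _ hr1
      rw [← hft] at h1'
      rw [hf R]
      exact h1'
    have : ((f R : ℕ+) : ℕ) ≡ 0 [MOD p] := h1.trans ((Nat.modEq_zero_iff_dvd).mpr hpft)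
    exact (Nat.modEq_zero_iff_dvd).mp this
  exact (hp.coprime_iff_not_dvd.mp hfR) hpfR
end
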